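/- Let d, C > 0 with dC ≤ 1. Then the function f(y) = d·arccosh(Cy) satisfies f''(y)/(1+f'(y)²) + f'(y)/y ≤ 0 for all y > 1/C, with strict inequality whenever dC < 1; equivalently, the graph of f is a stationary supersolution (and the graph of −f a stationary subsolution) of the rotationally symmetric graphical mean curvature flow equation with n = 2. -/

import Mathlib

/-- The inverse of `cosh` on `[1,∞)`: `arccosh x = log (x + √(x² − 1))` for `x ≥ 1`. -/
noncomputable def arccosh (x : ℝ) : ℝ := Real.log (x + Real.sqrt (x ^ 2 - 1))

open Real

lemma hasDerivAt_arccosh {x : ℝ} (hx : 1 < x) :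
    HasDerivAt arccosh (1 / Real.sqrt (x ^ 2 - 1)) x := by
  have hu : (0:ℝ) < x ^ 2 - 1 := by nlinarith
  set s := Real.sqrt (x ^ 2 - 1) with hs
  have hspos : 0 < s := Real.sqrt_pos.mpr hu
  have hs2 : s ^ 2 = x ^ 2 - 1 := Real.sq_sqrt hu.le
  have h1 : HasDerivAt (fun y : ℝ => y ^ 2 - 1) (2 * x) x := by
    simpa using ((hasDerivAt_pow 2 x).sub_const 1)
  have h2 : HasDerivAt (fun y : ℝ => Real.sqrt (y ^ 2 - 1)) (1 / (2 * s) * (2 * x)) x :=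
    (Real.hasDerivAt_sqrt (ne_of_gt hu)).comp x h1
  have h3 : HasDerivAt (fun y : ℝ => y + Real.sqrt (y ^ 2 - 1)) (1 + 1 / (2 * s) * (2 * x)) x :=
    (hasDerivAt_id x).add h2
  have hxs : x + s > 0 := by positivity
  have h4 : HasDerivAt (fun y : ℝ => Real.log (y + Real.sqrt (y ^ 2 - 1)))
      ((x + s)⁻¹ * (1 + 1 / (2 * s) * (2 * x))) x := by
    have := (Real.hasDerivAt_log (ne_of_gt hxs)).comp x h3
    exact this
  have : (x + s)⁻¹ * (1 + 1 / (2 * s) * (2 * x)) = 1 / s := by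
    field_simp
    ring
  rw [this] at h4
  exact h4

theorem catenoid_profile_supersolution (d C : ℝ) (hd : 0 < d) (hC : 0 < C)
    (hdC : d * C ≤ 1) :
    ∀ y : ℝ, 1 / C < y →
      deriv (deriv fun z => d * arccosh (C * z)) y /
          (1 + (deriv (fun z => d * arccosh (C * z)) y) ^ 2)
        + deriv (fun z => d * arccosh (C * z)) y / y ≤ 0 ∧
      (d * C < 1 →
        deriv (deriv fun z => d * arccosh (C * z)) y /
            (1 + (deriv (fun z => d * arccosh (C * z)) y) ^ 2)
          + deriv (fun z => d * arccosh (C * z)) y / y < 0) := by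
  -- first derivative formula on Ioi (1/C)
  have key : ∀ y : ℝ, 1 / C < y →
      HasDerivAt (fun z => d * arccosh (C * z)) (d * C / Real.sqrt ((C * y) ^ 2 - 1)) y := by
    intro y hy
    have hCy : 1 < C * y := by
      have := (div_lt_iff₀ hC).mp hy
      linarith [mul_comm y C]
    have h0 : HasDerivAt (fun z : ℝ => C * z) C y := by
      simpa using (hasDerivAt_id y).const_mul C
    have h1 := ((hasDerivAt_arccosh hCy).comp y h0).const_mul d
    have : d * (1 / Real.sqrt ((C * y) ^ 2 - 1) * C) = d * C / Real.sqrt ((C * y) ^ 2 - 1) := by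
      ring
    rw [this] at h1
    exact h1
  have hderiv : ∀ y : ℝ, 1 / C < y →
      deriv (fun z => d * arccosh (C * z)) y = d * C / Real.sqrt ((C * y) ^ 2 - 1) :=
    fun y hy => (key y hy).deriv
  intro y hy
  have hy0 : 0 < y := lt_trans (by positivity) hy
  have hCy : 1 < C * y := by
    have := (div_lt_iff₀ hC).mp hy
    linarith [mul_comm y C]
  have hu : (0:ℝ) < (C * y) ^ 2 - 1 := by nlinarith
  set s := Real.sqrt ((C * y) ^ 2 - 1) with hsdef
  have hspos : 0 < s := Real.sqrt_pos.mpr hu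
  have hs2 : s ^ 2 = (C * y) ^ 2 - 1 := Real.sq_sqrt hu.le
  -- second derivative
  have hg : HasDerivAt (fun z => d * C / Real.sqrt ((C * z) ^ 2 - 1))
      (-(d * C ^ 3 * y) / s ^ 3) y := by
    have h1 : HasDerivAt (fun z : ℝ => (C * z) ^ 2 - 1) (2 * C ^ 2 * y) y := by
      have h0 : HasDerivAt (fun z : ℝ => C * z) C y := by
        simpa using (hasDerivAt_id y).const_mul C
      have := (h0.pow 2).sub_const 1
      refine this.congr_deriv ?_
      ring
    have h2 : HasDerivAt (fun z : ℝ => Real.sqrt ((C * z) ^ 2 - 1))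
        (1 / (2 * s) * (2 * C ^ 2 * y)) y :=
      (Real.hasDerivAt_sqrt (ne_of_gt hu)).comp y h1
    have h3 := (hasDerivAt_const y (d * C)).div h2 (ne_of_gt hspos)
    refine h3.congr_deriv ?_
    rw [← hsdef]
    field_simp
    ring
  have hmem : Set.Ioi (1 / C) ∈ nhds y := Ioi_mem_nhds hy
  have hEq : (deriv fun z => d * arccosh (C * z)) =ᶠ[nhds y]
      (fun z => d * C / Real.sqrt ((C * z) ^ 2 - 1)) := by
    filter_upwards [hmem] with z hz
    exact hderiv z hz
  have hderiv2 : deriv (deriv fun z => d * arccosh (C * z)) y = -(d * C ^ 3 * y) / s ^ 3 := by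
    rw [hEq.deriv_eq]
    exact hg.deriv
  rw [hderiv2, hderiv y hy, ← hsdef]
  -- now pure algebra
  have hkey : -(d * C ^ 3 * y) / s ^ 3 / (1 + (d * C / s) ^ 2) + d * C / s / y
      = d * C * ((d * C) ^ 2 - 1) / (s * y * (s ^ 2 + (d * C) ^ 2)) := by
    have h1 : s ^ 2 + (d * C) ^ 2 > 0 := by positivity
    field_simp
    linear_combination hs2
  rw [hkey]
  have hden : 0 < s * y * (s ^ 2 + (d * C) ^ 2) := by positivity
  constructor
  · apply div_nonpos_of_nonpos_of_nonneg _ hden.le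
    have : d * C ≤ 1 := hdC
    nlinarith [mul_pos hd hC]
  · intro hlt
    apply div_neg_of_neg_of_pos _ hden
    nlinarith [mul_pos hd hC]
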